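/- Let Λ be a ring (or Artin algebra). The class ^⊥(GInj Λ) = {X : Ext^i(X, Y) = 0 for all i > 0 and all Gorenstein injective Y} is a thick subcategory of Mod Λ: it is closed under direct summands, extensions, kernels of epimorphisms between its objects, and cokernels of monomorphisms between its objects. -/

import Mathlib

open CategoryTheory Limits Opposite

universe u v

/-- `Ext^i(X, Y) = 0` for all `i > 0`. -/
noncomputable def ExtVanish (Λ : Type) [Ring Λ] (X Y : ModuleCat.{0} Λ) : Prop :=
  ∀ i : ℕ, 0 < i → Subsingleton (((Ext ℤ (ModuleCat.{0} Λ) i).obj (op X)).obj Y)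

/-- The right `Ext`-orthogonal complement `𝒳^⊥` of a class of modules. -/
noncomputable def rightPerp (Λ : Type) [Ring Λ] (𝒳 : Set (ModuleCat.{0} Λ)) :
    Set (ModuleCat.{0} Λ) :=
  {Y | ∀ X ∈ 𝒳, ExtVanish Λ X Y}

/-- The left `Ext`-orthogonal complement `^⊥𝒴` of a class of modules. -/
noncomputable def leftPerp (Λ : Type) [Ring Λ] (𝒴 : Set (ModuleCat.{0} Λ)) :
    Set (ModuleCat.{0} Λ) :=
  {X | ∀ Y ∈ 𝒴, ExtVanish Λ X Y}

/-- A cotorsion pair `(𝒳, 𝒴)` for `Mod Λ`: mutual `Ext`-orthogonality plus existence of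
special right `𝒳`-approximations and special left `𝒴`-approximations. -/
structure IsCotorsionPair (Λ : Type) [Ring Λ] (𝒳 𝒴 : Set (ModuleCat.{0} Λ)) : Prop where
  left_eq : 𝒳 = leftPerp Λ 𝒴
  right_eq : 𝒴 = rightPerp Λ 𝒳
  special_right : ∀ C : ModuleCat.{0} Λ, ∃ S : ShortComplex (ModuleCat.{0} Λ),
    S.ShortExact ∧ Nonempty (S.X₃ ≅ C) ∧ S.X₂ ∈ 𝒳 ∧ S.X₁ ∈ rightPerp Λ 𝒳
  special_left : ∀ A : ModuleCat.{0} Λ, ∃ S : ShortComplex (ModuleCat.{0} Λ),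
    S.ShortExact ∧ Nonempty (S.X₁ ≅ A) ∧ S.X₂ ∈ 𝒴 ∧ S.X₃ ∈ leftPerp Λ 𝒴

/-- A resolving subcategory: contains the projectives, closed under extensions and
kernels of epimorphisms. -/
def IsResolving (Λ : Type) [Ring Λ] (𝒞 : Set (ModuleCat.{0} Λ)) : Prop :=
  (∀ P : ModuleCat.{0} Λ, Projective P → P ∈ 𝒞) ∧
  (∀ S : ShortComplex (ModuleCat.{0} Λ), S.ShortExact → S.X₁ ∈ 𝒞 → S.X₃ ∈ 𝒞 → S.X₂ ∈ 𝒞) ∧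
  (∀ S : ShortComplex (ModuleCat.{0} Λ), S.ShortExact → S.X₂ ∈ 𝒞 → S.X₃ ∈ 𝒞 → S.X₁ ∈ 𝒞)

/-- A totally acyclic complex of projectives: a complex of projective modules such that
`Hom(P, X)` and `Hom(X, P)` are acyclic for every projective `P`. -/
structure IsTotAcyclicProj (Λ : Type) [Ring Λ] (T : CochainComplex (ModuleCat.{0} Λ) ℤ) :
    Prop where
  proj : ∀ n : ℤ, Projective (T.X n)
  homFrom : ∀ P : ModuleCat.{0} Λ, Projective P → ∀ (n : ℤ) (f : P ⟶ T.X n),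
    f ≫ T.d n (n + 1) = 0 → ∃ g : P ⟶ T.X (n - 1), f = g ≫ T.d (n - 1) n
  homTo : ∀ P : ModuleCat.{0} Λ, Projective P → ∀ (n : ℤ) (f : T.X n ⟶ P),
    T.d (n - 1) n ≫ f = 0 → ∃ g : T.X (n + 1) ⟶ P, f = T.d n (n + 1) ≫ g

/-- A totally acyclic complex of injectives: a complex of injective modules such that
`Hom(J, X)` and `Hom(X, J)` are acyclic for every injective `J`. -/
structure IsTotAcyclicInj (Λ : Type) [Ring Λ] (T : CochainComplex (ModuleCat.{0} Λ) ℤ) :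
    Prop where
  inj : ∀ n : ℤ, Injective (T.X n)
  homFrom : ∀ J : ModuleCat.{0} Λ, Injective J → ∀ (n : ℤ) (f : J ⟶ T.X n),
    f ≫ T.d n (n + 1) = 0 → ∃ g : J ⟶ T.X (n - 1), f = g ≫ T.d (n - 1) n
  homTo : ∀ J : ModuleCat.{0} Λ, Injective J → ∀ (n : ℤ) (f : T.X n ⟶ J),
    T.d (n - 1) n ≫ f = 0 → ∃ g : T.X (n + 1) ⟶ J, f = T.d n (n + 1) ≫ g

/-- A module is Gorenstein projective if it is the cokernel `Coker(X⁻¹ → X⁰)` of a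
totally acyclic complex of projectives. -/
noncomputable def IsGorensteinProjective (Λ : Type) [Ring Λ] (G : ModuleCat.{0} Λ) : Prop :=
  ∃ T : CochainComplex (ModuleCat.{0} Λ) ℤ, IsTotAcyclicProj Λ T ∧
    Nonempty (G ≅ cokernel (T.d (-1) 0))

/-- A module is Gorenstein injective if it is the kernel `Ker(X⁰ → X¹)` of a
totally acyclic complex of injectives. -/
noncomputable def IsGorensteinInjective (Λ : Type) [Ring Λ] (G : ModuleCat.{0} Λ) : Prop :=
  ∃ T : CochainComplex (ModuleCat.{0} Λ) ℤ, IsTotAcyclicInj Λ T ∧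
    Nonempty (G ≅ kernel (T.d 0 1))


namespace Stmt12Aux
variable {Λ : Type} [Ring Λ]

/-- concrete short exact sequence data -/
def ConcSES {G E X : ModuleCat.{0} Λ} (a : G ⟶ E) (p : E ⟶ X) : Prop :=
  Function.Injective a ∧ Function.Surjective p ∧ ∀ e : E, p e = 0 ↔ ∃ g, a g = e

lemma ConcSES.a_p {G E X : ModuleCat.{0} Λ} {a : G ⟶ E} {p : E ⟶ X} (h : ConcSES a p)
    (g : G) : p (a g) = 0 := (h.2.2 (a g)).2 ⟨g, rfl⟩

lemma descend {E X W : ModuleCat.{0} Λ} (p : E ⟶ X) (hs : Function.Surjective p)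
    (φ : E ⟶ W) (h : ∀ e, p e = 0 → φ e = 0) : ∃ ψ : X ⟶ W, p ≫ ψ = φ := by
  have key : ∀ u v : E, p u = p v → φ u = φ v := by
    intro u v huv
    have h0 : φ (u - v) = 0 := h _ (by rw [map_sub, huv, sub_self])
    rw [map_sub, sub_eq_zero] at h0; exact h0
  let σ := Function.surjInv hs
  have hσ : ∀ x, p (σ x) = x := fun x => Function.surjInv_eq hs x
  refine ⟨ModuleCat.ofHom ⟨⟨fun x => φ (σ x), ?_⟩, ?_⟩, ?_⟩
  · intro x y
    have h2 : φ (σ (x + y)) = φ (σ x + σ y) := key _ _ (by rw [map_add, hσ, hσ, hσ])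
    show φ (σ (x + y)) = φ (σ x) + φ (σ y)
    rw [h2, map_add]
  · intro c x
    have h2 : φ (σ (c • x)) = φ (c • σ x) := key _ _ (by rw [map_smul, hσ, hσ])
    show φ (σ (c • x)) = c • φ (σ x)
    rw [h2, map_smul]
  · ext e
    exact key _ _ (hσ (p e))

lemma invComp {G E W : ModuleCat.{0} Λ} (a : G ⟶ E) (ha : Function.Injective a)
    (u : W ⟶ E) (h : ∀ w, ∃ g, a g = u w) : ∃ v : W ⟶ G, v ≫ a = u := by
  choose t ht using h
  refine ⟨ModuleCat.ofHom ⟨⟨t, ?_⟩, ?_⟩, ?_⟩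
  · intro x y; apply ha
    show a (t (x + y)) = a (t x + t y)
    rw [ht, map_add, map_add, ht, ht]
  · intro c x; apply ha
    show a (t (c • x)) = a (c • t x)
    rw [ht, map_smul, map_smul, ht]
  · ext w; exact ht w

lemma sectionOfRetraction {G E X : ModuleCat.{0} Λ} {a : G ⟶ E} {p : E ⟶ X}
    (h : ConcSES a p) (r : E ⟶ G) (hr : a ≫ r = 𝟙 G) : ∃ s : X ⟶ E, s ≫ p = 𝟙 X := by
  obtain ⟨ψ, hψ⟩ := descend p h.2.1 (𝟙 E - r ≫ a) (by
    intro e he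
    obtain ⟨g, rfl⟩ := (h.2.2 e).1 he
    have : r (a g) = g := congrArg (fun f => f g) hr
    show a g - a (r (a g)) = 0
    rw [this, sub_self])
  refine ⟨ψ, ?_⟩
  ext x
  obtain ⟨e, rfl⟩ := h.2.1 x
  have h1 : ψ (p e) = e - a (r e) := congrArg (fun f => f e) hψ
  show p (ψ (p e)) = p e
  rw [h1, map_sub, h.a_p, sub_zero]

lemma retractionOfSection {G E X : ModuleCat.{0} Λ} {a : G ⟶ E} {p : E ⟶ X}
    (h : ConcSES a p) (s : X ⟶ E) (hs : s ≫ p = 𝟙 X) : ∃ r : E ⟶ G, a ≫ r = 𝟙 G := by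
  obtain ⟨v, hv⟩ := invComp a h.1 (𝟙 E - p ≫ s) (by
    intro e
    apply (h.2.2 _).1
    have h1 : p (s (p e)) = p e := congrArg (fun f => f (p e)) hs
    show p (e - s (p e)) = 0
    rw [map_sub, h1, sub_self])
  refine ⟨v, ?_⟩
  ext g
  apply h.1
  have h1 : a (v (a g)) = a g - s (p (a g)) := congrArg (fun f => f (a g)) hv
  show a (v (a g)) = a g
  rw [h1, h.a_p, map_zero, sub_zero]


def LiftAt {X : ModuleCat.{0} Λ} (P : ProjectiveResolution X) (G : ModuleCat.{0} Λ) (n : ℕ) : Prop :=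
  ∀ f : P.complex.X (n+1) ⟶ G, P.complex.d (n+2) (n+1) ≫ f = 0 →
    ∃ g : P.complex.X n ⟶ G, P.complex.d (n+1) n ≫ g = f

lemma subsingleton_iff_isZero (M : ModuleCat.{0} ℤ) : Subsingleton M ↔ IsZero M := by
  constructor
  · intro h; exact ModuleCat.isZero_of_subsingleton M
  · intro h
    refine ⟨fun a b => ?_⟩
    have h1 : (𝟙 M : M ⟶ M) = 0 := h.eq_of_src _ _
    calc a = (𝟙 M : M ⟶ M) a := rfl
    _ = (0 : M ⟶ M) a := by rw [h1]
    _ = (𝟙 M : M ⟶ M) b := by rw [h1]; rfl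
    _ = b := rfl

lemma extVanish_iff_liftAt {X : ModuleCat.{0} Λ} (P : ProjectiveResolution X)
    (G : ModuleCat.{0} Λ) : ExtVanish Λ X G ↔ ∀ n : ℕ, LiftAt P G n := by
  have key : ∀ n : ℕ, (Subsingleton (((Ext ℤ (ModuleCat.{0} Λ) (n+1)).obj (op X)).obj G)
      ↔ LiftAt P G n) := by
    intro n
    have e := P.isoExt (R := ℤ) (n+1) G
    have hd : ∀ (i j : ℕ) (f : (P.complex.linearYonedaObj ℤ G).X i),
        ((P.complex.linearYonedaObj ℤ G).d i j) f = P.complex.d j i ≫ f := by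
      intro i j f; simp [ChainComplex.linearYonedaObj]; rfl
    have hs : Subsingleton (((Ext ℤ (ModuleCat.{0} Λ) (n+1)).obj (op X)).obj G) ↔
        Subsingleton ((P.complex.linearYonedaObj ℤ G).homology (n+1)) :=
      ((forget (ModuleCat ℤ)).mapIso e).toEquiv.subsingleton_congr
    rw [hs]
    rw [subsingleton_iff_isZero, ← HomologicalComplex.exactAt_iff_isZero_homology]
    rw [(P.complex.linearYonedaObj ℤ G).exactAt_iff' n (n+1) (n+2) (by simp) (by simp)]
    rw [ShortComplex.moduleCat_exact_iff]
    have hg' : ∀ (f : P.complex.X (n+1) ⟶ G),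
        ((P.complex.linearYonedaObj ℤ G).sc' n (n+1) (n+2)).g f = P.complex.d (n+2) (n+1) ≫ f :=
      fun f => hd (n+1) (n+2) f
    have hf' : ∀ (g : P.complex.X n ⟶ G),
        ((P.complex.linearYonedaObj ℤ G).sc' n (n+1) (n+2)).f g = P.complex.d (n+1) n ≫ g :=
      fun g => hd n (n+1) g
    constructor
    · intro h f hf
      obtain ⟨g, hg⟩ := h f (by rw [hg' f]; exact hf)
      exact ⟨g, by rw [hf' g] at hg; exact hg⟩
    · intro h f hf
      obtain ⟨g, hg⟩ := h f (by rw [hg' f] at hf; exact hf)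
      exact ⟨g, by rw [hf' g]; exact hg⟩
  constructor
  · intro h n; exact (key n).1 (h (n+1) (Nat.succ_pos n))
  · intro h i hi
    obtain ⟨n, rfl⟩ : ∃ n, i = n + 1 := ⟨i - 1, by omega⟩
    exact (key n).2 (h n)

variable {T : CochainComplex (ModuleCat.{0} Λ) ℤ}

lemma homFrom' (hT : IsTotAcyclicInj Λ T) {J : ModuleCat.{0} Λ} (hJ : Injective J)
    (n k m : ℤ) (hk : k = n + 1) (hm : m = n - 1) (f : J ⟶ T.X n) (hf : f ≫ T.d n k = 0) :
    ∃ g : J ⟶ T.X m, f = g ≫ T.d m n := by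
  subst hk hm; exact hT.homFrom J hJ n f hf

lemma homTo' (hT : IsTotAcyclicInj Λ T) {J : ModuleCat.{0} Λ} (hJ : Injective J)
    (n k m : ℤ) (hk : k = n + 1) (hm : m = n - 1) (f : T.X n ⟶ J) (hf : T.d m n ≫ f = 0) :
    ∃ g : T.X k ⟶ J, f = T.d n k ≫ g := by
  subst hk hm; exact hT.homTo J hJ n f hf

lemma exact' (hT : IsTotAcyclicInj Λ T) (i j k : ℤ) (hij : j = i + 1) (hjk : k = j + 1)
    (x : T.X j) (hx : T.d j k x = 0) : ∃ w : T.X i, T.d i j w = x := by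
  subst hij hjk
  set Q := ModuleCat.of Λ ((T.X (i+1)) ⧸ LinearMap.range (T.d i (i+1)).hom)
  set f : T.X (i+1) ⟶ Q := ModuleCat.ofHom (LinearMap.range (T.d i (i+1)).hom).mkQ with hfdef
  set f' : T.X (i+1) ⟶ Injective.under Q := f ≫ Injective.ι Q with hf'def
  have hDf : T.d i (i+1) ≫ f' = 0 := by
    ext w
    show (Injective.ι Q) (f (T.d i (i+1) w)) = 0
    have : f (T.d i (i+1) w) = 0 := (Submodule.Quotient.mk_eq_zero _).mpr ⟨w, rfl⟩
    rw [this, map_zero]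
  obtain ⟨g, hg⟩ := homTo' hT (J := Injective.under Q) inferInstance (i+1) (i+1+1) i
    rfl (by ring) f' hDf
  have hfx : f' x = 0 := by
    have := congrArg (fun φ => φ x) hg
    simp only at this
    show f' x = 0
    rw [this]
    show g (T.d (i+1) (i+1+1) x) = 0
    rw [hx, map_zero]
  have hmono : Function.Injective (Injective.ι Q) :=
    (ModuleCat.mono_iff_injective _).1 inferInstance
  have hfx0 : f x = 0 := by
    apply hmono
    rw [map_zero]
    exact hfx
  exact (Submodule.Quotient.mk_eq_zero _).mp hfx0

/-- shift of a cochain complex by `c` -/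
@[simps]
def shiftT (T : CochainComplex (ModuleCat.{0} Λ) ℤ) (c : ℤ) :
    CochainComplex (ModuleCat.{0} Λ) ℤ where
  X n := T.X (n + c)
  d m n := T.d (m + c) (n + c)
  shape := by
    intro m n h
    apply T.shape
    simp only [ComplexShape.up_Rel] at *
    omega
  d_comp_d' := by intros; apply T.d_comp_d

lemma shiftT_totAcyclic (hT : IsTotAcyclicInj Λ T) (c : ℤ) :
    IsTotAcyclicInj Λ (shiftT T c) where
  inj n := hT.inj (n + c)
  homFrom J hJ n f hf := by
    obtain ⟨g, hg⟩ := homFrom' hT hJ (n + c) (n + 1 + c) (n - 1 + c) (by ring) (by ring) f hf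
    exact ⟨g, hg⟩
  homTo J hJ n f hf := by
    obtain ⟨g, hg⟩ := homTo' hT hJ (n + c) (n + 1 + c) (n - 1 + c) (by ring) (by ring) f hf
    exact ⟨g, hg⟩

noncomputable def kernelCongr (T : CochainComplex (ModuleCat.{0} Λ) ℤ) (i j i' j' : ℤ)
    (hi : i' = i) (hj : j' = j) :
    kernel (T.d i' j') ≅ ModuleCat.of Λ (LinearMap.ker (T.d i j).hom) := by
  subst hi hj; exact ModuleCat.kernelIsoKer _

lemma isGI_ker (hT : IsTotAcyclicInj Λ T) (j k : ℤ) (hjk : k = j + 1) :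
    IsGorensteinInjective Λ (ModuleCat.of Λ (LinearMap.ker (T.d j k).hom)) :=
  ⟨shiftT T j, shiftT_totAcyclic hT j,
    ⟨(kernelCongr T j k (0 + j) (1 + j) (by ring) (by omega)).symm⟩⟩


lemma d_d_mem (i j k : ℤ) (x : T.X i) : T.d i j x ∈ LinearMap.ker (T.d j k).hom := by
  show T.d j k (T.d i j x) = 0
  have h := T.d_comp_d i j k
  have := congrArg (fun φ => φ x) h
  exact this

/-- G Gorenstein injective embeds into an injective with Gorenstein injective cokernel. -/
lemma GIses {G : ModuleCat.{0} Λ} (hG : IsGorensteinInjective Λ G) :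
    ∃ (I Gp : ModuleCat.{0} Λ), Injective I ∧ IsGorensteinInjective Λ Gp ∧
      ∃ (a : G ⟶ I) (p : I ⟶ Gp), ConcSES a p := by
  obtain ⟨T, hT, ⟨e⟩⟩ := hG
  have e2 : G ≅ ModuleCat.of Λ (LinearMap.ker (T.d 0 1).hom) := e ≪≫ ModuleCat.kernelIsoKer _
  have he2 : Function.Injective e2.hom := (ModuleCat.mono_iff_injective _).1 inferInstance
  refine ⟨T.X 0, ModuleCat.of Λ (LinearMap.ker (T.d 1 2).hom), hT.inj 0, isGI_ker hT 1 2 rfl,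
    e2.hom ≫ ModuleCat.ofHom (LinearMap.ker (T.d 0 1).hom).subtype,
    ModuleCat.ofHom (LinearMap.codRestrict _ (T.d 0 1).hom (fun x => d_d_mem 0 1 2 x)), ?_, ?_, ?_⟩
  · intro x y hxy
    apply he2
    exact Subtype.ext hxy
  · rintro ⟨y, hy⟩
    obtain ⟨w, hw⟩ := exact' hT 0 1 2 rfl rfl y hy
    exact ⟨w, Subtype.ext hw⟩
  · intro x
    constructor
    · intro hx
      have hx' : T.d 0 1 x = 0 := congrArg Subtype.val hx
      refine ⟨e2.inv ⟨x, hx'⟩, ?_⟩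
      show ((LinearMap.ker (T.d 0 1).hom).subtype) (e2.hom (e2.inv ⟨x, hx'⟩)) = x
      have : e2.hom (e2.inv ⟨x, hx'⟩) = ⟨x, hx'⟩ := congrArg (fun φ => φ ⟨x, hx'⟩) e2.inv_hom_id
      rw [this]
      rfl
    · rintro ⟨g, rfl⟩
      apply Subtype.ext
      show T.d 0 1 (((LinearMap.ker (T.d 0 1).hom).subtype) (e2.hom g)) = 0
      exact (e2.hom g).2

/-- G Gorenstein injective is a quotient of an injective with Gorenstein injective kernel. -/
lemma GIses' {G : ModuleCat.{0} Λ} (hG : IsGorensteinInjective Λ G) :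
    ∃ (J G' : ModuleCat.{0} Λ), Injective J ∧ IsGorensteinInjective Λ G' ∧
      ∃ (a : G' ⟶ J) (p : J ⟶ G), ConcSES a p := by
  obtain ⟨T, hT, ⟨e⟩⟩ := hG
  have e2 : G ≅ ModuleCat.of Λ (LinearMap.ker (T.d 0 1).hom) := e ≪≫ ModuleCat.kernelIsoKer _
  have he2 : Function.Injective e2.inv := (ModuleCat.mono_iff_injective _).1 inferInstance
  have he2s : Function.Surjective e2.inv := by
    intro g; exact ⟨e2.hom g, congrArg (fun φ => φ g) e2.hom_inv_id⟩
  refine ⟨T.X (-1), ModuleCat.of Λ (LinearMap.ker (T.d (-1) 0).hom), hT.inj (-1),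
    isGI_ker hT (-1) 0 (by ring),
    ModuleCat.ofHom (LinearMap.ker (T.d (-1) 0).hom).subtype,
    (ModuleCat.ofHom (LinearMap.codRestrict _ (T.d (-1) 0).hom (fun x => d_d_mem (-1) 0 1 x)) :
      T.X (-1) ⟶ ModuleCat.of Λ (LinearMap.ker (T.d 0 1).hom)) ≫ e2.inv, ?_, ?_, ?_⟩
  · exact fun x y hxy => Subtype.ext hxy
  · intro g
    obtain ⟨⟨y, hy⟩, rfl⟩ := he2s g
    obtain ⟨w, hw⟩ := exact' hT (-1) 0 1 (by ring) rfl y hy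
    exact ⟨w, by
      show e2.inv _ = e2.inv _
      congr 1
      exact Subtype.ext hw⟩
  · intro x
    constructor
    · intro hx
      have hx0 : (LinearMap.codRestrict _ (T.d (-1) 0).hom (fun x => d_d_mem (-1) 0 1 x)) x
          = (0 : LinearMap.ker (T.d 0 1).hom) := by
        apply he2
        rw [map_zero]
        exact hx
      have hx' : T.d (-1) 0 x = 0 := congrArg Subtype.val hx0
      exact ⟨⟨x, hx'⟩, rfl⟩
    · rintro ⟨⟨g, hg⟩, rfl⟩
      show e2.inv _ = 0
      have : (LinearMap.codRestrict _ (T.d (-1) 0).hom (fun x => d_d_mem (-1) 0 1 x))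
          (((LinearMap.ker (T.d (-1) 0).hom).subtype) ⟨g, hg⟩) = 0 := by
        apply Subtype.ext
        exact hg
      have h2 := congrArg (fun z => e2.inv z) this
      simp only [map_zero] at h2
      exact h2


section
variable {X : ModuleCat.{0} Λ} (P : ProjectiveResolution X)

lemma res_exact (n : ℕ) (x : P.complex.X (n+1)) (hx : P.complex.d (n+1) n x = 0) :
    ∃ y, P.complex.d (n+2) (n+1) y = x := by
  have h := (P.exact_succ n)
  rw [ShortComplex.moduleCat_exact_iff] at h
  exact h x hx

/-- lifting property against injectives in positive degrees -/
lemma liftAt_injective {J : ModuleCat.{0} Λ} (hJ : Injective J) (n : ℕ) : LiftAt P J n := by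
  intro f hf
  set D := P.complex.d (n+1) n with hD
  -- f kills ker D
  have hker : ∀ x, D x = 0 → f x = 0 := by
    intro x hx
    obtain ⟨y, rfl⟩ := res_exact P n x hx
    exact congrArg (fun φ => φ y) hf
  -- factor through range D
  let R := ModuleCat.of Λ (LinearMap.range D.hom)
  have hsurj : Function.Surjective
      (LinearMap.rangeRestrict D.hom) :=
    LinearMap.surjective_rangeRestrict _
  obtain ⟨fbar, hfbar⟩ := descend (X := R)
    (ModuleCat.ofHom (LinearMap.rangeRestrict D.hom)) hsurj f
    (by
      intro e he
      apply hker
      exact congrArg Subtype.val he)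
  -- extend along R ↪ P.complex.X n
  let ι : R ⟶ P.complex.X n :=
    ModuleCat.ofHom (LinearMap.range D.hom).subtype
  have hmono : Mono ι := by
    rw [ModuleCat.mono_iff_injective]
    exact Subtype.val_injective
  have : Injective J := hJ
  refine ⟨Injective.factorThru fbar ι, ?_⟩
  ext x
  have hcomm := Injective.comp_factorThru fbar ι
  have h1 : (Injective.factorThru fbar ι) (D x) = fbar (LinearMap.rangeRestrict
      D.hom x) := by
    have := congrArg (fun φ => φ ((LinearMap.rangeRestrict
      D.hom) x)) hcomm
    exact this
  show (Injective.factorThru fbar ι) (D x) = f x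
  rw [h1]
  exact congrArg (fun φ => φ x) hfbar



lemma liftAt_step {G I Gp : ModuleCat.{0} Λ} (hI : Injective I)
    (a : G ⟶ I) (p : I ⟶ Gp) (hses : ConcSES a p) (n : ℕ)
    (hGp : LiftAt P Gp n) : LiftAt P G (n+1) := by
  intro f hf
  obtain ⟨u, hu⟩ := liftAt_injective P hI (n+1) (f ≫ a)
    (by rw [← Category.assoc, hf, zero_comp])
  have hap : a ≫ p = 0 := by ext g; exact hses.a_p g
  obtain ⟨v, hv⟩ := hGp (u ≫ p) (by
    rw [← Category.assoc, hu, Category.assoc, hap, comp_zero])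
  have hepi : Epi p := (ModuleCat.epi_iff_surjective p).2 hses.2.1
  have hproj : Projective (P.complex.X n) := P.projective n
  let w : P.complex.X n ⟶ I := Projective.factorThru v p
  have hw : w ≫ p = v := Projective.factorThru_comp v p
  have hzero : (u - P.complex.d (n+1) n ≫ w) ≫ p = 0 := by
    rw [Preadditive.sub_comp, Category.assoc, hw, hv, sub_self]
  obtain ⟨g, hg⟩ := invComp a hses.1 (u - P.complex.d (n+1) n ≫ w) (by
    intro x
    apply (hses.2.2 _).1
    exact congrArg (fun φ => φ x) hzero)
  refine ⟨g, ?_⟩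
  have h3 : (P.complex.d (n+1+1) (n+1) ≫ g) ≫ a = f ≫ a := by
    rw [Category.assoc, hg, Preadditive.comp_sub, hu, ← Category.assoc,
      P.complex.d_comp_d, zero_comp, sub_zero]
  ext x
  apply hses.1
  exact congrArg (fun φ => φ x) h3


lemma pi_surj : Function.Surjective (P.π.f 0 : P.complex.X 0 ⟶ X) := by
  have : Epi (P.π.f 0) := inferInstance
  exact (ModuleCat.epi_iff_surjective (P.π.f 0 : P.complex.X 0 ⟶ X)).1 this

lemma pi_exact (x : P.complex.X 0) (hx : (P.π.f 0 : P.complex.X 0 ⟶ X) x = 0) :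
    ∃ y, P.complex.d 1 0 y = x := by
  have h := P.exact₀
  rw [ShortComplex.moduleCat_exact_iff] at h
  exact h x hx

lemma split_of_liftAt {G E : ModuleCat.{0} Λ} (hG : LiftAt P G 0)
    (a : G ⟶ E) (p : E ⟶ X) (hses : ConcSES a p) : ∃ r : E ⟶ G, a ≫ r = 𝟙 G := by
  let πX : P.complex.X 0 ⟶ X := P.π.f 0
  have hepi : Epi p := (ModuleCat.epi_iff_surjective p).2 hses.2.1
  have hproj : Projective (P.complex.X 0) := P.projective 0
  let u₀ : P.complex.X 0 ⟶ E := Projective.factorThru πX p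
  have hu₀ : u₀ ≫ p = πX := Projective.factorThru_comp _ _
  have hdu : (P.complex.d 1 0 ≫ u₀) ≫ p = 0 := by
    rw [Category.assoc, hu₀]
    exact P.complex_d_comp_π_f_zero
  obtain ⟨F, hF⟩ := invComp a hses.1 (P.complex.d 1 0 ≫ u₀) (fun y =>
    (hses.2.2 _).1 (congrArg (fun φ => φ y) hdu))
  have hF2 : P.complex.d 2 1 ≫ F = 0 := by
    have h0 : (P.complex.d 2 1 ≫ F) ≫ a = 0 ≫ a := by
      rw [Category.assoc, hF, ← Category.assoc, P.complex.d_comp_d, zero_comp, zero_comp]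
    ext y
    apply hses.1
    exact congrArg (fun φ => φ y) h0
  obtain ⟨g, hg⟩ := hG F hF2
  have hφd : P.complex.d 1 0 ≫ (u₀ - g ≫ a) = 0 := by
    rw [Preadditive.comp_sub, ← Category.assoc, hg, hF, sub_self]
  obtain ⟨s, hs⟩ := descend πX (pi_surj P) (u₀ - g ≫ a) (by
    intro x hx
    obtain ⟨y, rfl⟩ := pi_exact P x hx
    exact congrArg (fun φ => φ y) hφd)
  have hap : a ≫ p = 0 := by ext g'; exact hses.a_p g'
  have hsp : s ≫ p = 𝟙 X := by
    have h1 : πX ≫ s ≫ p = πX ≫ 𝟙 X := by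
      rw [← Category.assoc, hs, Preadditive.sub_comp, hu₀, Category.assoc, hap,
        comp_zero, sub_zero, Category.comp_id]
    ext x
    obtain ⟨z, rfl⟩ := pi_surj P x
    exact congrArg (fun φ => φ z) h1
  exact retractionOfSection hses s hsp

lemma liftAt_zero_of_split {G : ModuleCat.{0} Λ}
    (hsplit : ∀ (E : ModuleCat.{0} Λ) (a : G ⟶ E) (p : E ⟶ X), ConcSES a p →
      ∃ r : E ⟶ G, a ≫ r = 𝟙 G) : LiftAt P G 0 := by
  intro f hf
  set D : P.complex.X 1 ⟶ P.complex.X 0 := P.complex.d 1 0 with hD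
  let πX : P.complex.X 0 ⟶ X := P.π.f 0
  set W : Submodule Λ (G × P.complex.X 0) :=
    LinearMap.range (LinearMap.prod f.hom
      (-D.hom)) with hW
  let E : ModuleCat.{0} Λ := ModuleCat.of Λ ((G × P.complex.X 0) ⧸ W)
  let a : G ⟶ E := ModuleCat.ofHom <| W.mkQ.comp (LinearMap.inl Λ G (P.complex.X 0))
  have hπd : ∀ y, πX (D y) = 0 := by
    intro y
    exact congrArg (fun φ => φ y) P.complex_d_comp_π_f_zero
  have hWle : W ≤ LinearMap.ker (πX.hom.comp
      (LinearMap.snd Λ G (P.complex.X 0))) := by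
    rintro w ⟨y, rfl⟩
    show πX (-(D y)) = 0
    rw [map_neg, hπd, neg_zero]
  let p : E ⟶ X := ModuleCat.ofHom <| W.liftQ (πX.hom.comp
    (LinearMap.snd Λ G (P.complex.X 0))) hWle
  have hmk : ∀ (u v : G × P.complex.X 0), u - v ∈ W → W.mkQ u = W.mkQ v := by
    intro u v huv
    rw [Submodule.mkQ_apply, Submodule.mkQ_apply]
    exact (Submodule.Quotient.eq W).2 huv
  have hses : ConcSES a p := by
    refine ⟨?_, ?_, ?_⟩
    · intro g1 g2 h12
      have h0 : ((g1, 0) : G × P.complex.X 0) - (g2, 0) ∈ W := by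
        rw [← Submodule.Quotient.eq W]
        exact h12
      obtain ⟨y, hy⟩ := h0
      have hy' : (f y, -(D y)) = ((g1, 0) : G × P.complex.X 0) - (g2, 0) := hy
      rw [Prod.mk_sub_mk, sub_zero] at hy'
      have hy1 : f y = g1 - g2 := congrArg Prod.fst hy'
      have hy2 : -(D y) = (0 : P.complex.X 0) := congrArg Prod.snd hy'
      have hy2' : D y = 0 := by rwa [neg_eq_zero] at hy2
      obtain ⟨z, rfl⟩ := res_exact P 0 y hy2'
      have hfz : f (P.complex.d 2 1 z) = 0 := congrArg (fun φ => φ z) hf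
      have hsub : g1 - g2 = 0 := by rw [← hy1]; exact hfz
      exact sub_eq_zero.mp hsub
    · intro x
      obtain ⟨z, rfl⟩ := pi_surj P x
      exact ⟨W.mkQ (0, z), rfl⟩
    · intro e
      constructor
      · intro he
        obtain ⟨⟨g0, x0⟩, rfl⟩ := W.mkQ_surjective e
        have hx0 : πX x0 = 0 := he
        obtain ⟨y, hy⟩ := pi_exact P x0 hx0
        refine ⟨g0 + f y, hmk _ _ ?_⟩
        refine ⟨y, ?_⟩
        show (f y, -(D y)) = ((g0 + f y, 0) : G × P.complex.X 0) - (g0, x0)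
        rw [Prod.mk_sub_mk, ← hy]
        refine congrArg₂ Prod.mk ?_ ?_
        · rw [add_sub_cancel_left]
        · rw [zero_sub]
      · rintro ⟨g, rfl⟩
        show πX 0 = 0
        rw [map_zero]
  obtain ⟨r, hr⟩ := hsplit E a p hses
  refine ⟨(ModuleCat.ofHom (W.mkQ.comp (LinearMap.inr Λ G (P.complex.X 0))) : P.complex.X 0 ⟶ E) ≫ r, ?_⟩
  ext y
  show r (W.mkQ (0, D y)) = f y
  have h1 : W.mkQ ((0 : G), D y) = W.mkQ (f y, 0) := by
    apply hmk
    refine ⟨-y, ?_⟩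
    show (f (-y), -(D (-y))) = ((0, D y) : G × P.complex.X 0) - (f y, 0)
    rw [map_neg, map_neg, neg_neg, Prod.mk_sub_mk]
    refine congrArg₂ Prod.mk ?_ ?_
    · rw [zero_sub]
    · rw [sub_zero]
  rw [h1]
  exact congrArg (fun φ => φ (f y)) hr


end

def Good (Λ : Type) [Ring Λ] (X : ModuleCat.{0} Λ) : Prop :=
  ∀ ⦃G : ModuleCat.{0} Λ⦄, IsGorensteinInjective Λ G →
    ∀ ⦃E : ModuleCat.{0} Λ⦄ (a : G ⟶ E) (p : E ⟶ X), ConcSES a p → ∃ r : E ⟶ G, a ≫ r = 𝟙 G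

/-- pullback of a concrete SES along a map -/
lemma pullbackData {G E X' Y : ModuleCat.{0} Λ} (a : G ⟶ E) (p : E ⟶ Y)
    (hses : ConcSES a p) (ρ : X' ⟶ Y) :
    ∃ (Eb : ModuleCat.{0} Λ) (ab : G ⟶ Eb) (pb : Eb ⟶ X') (q : Eb ⟶ E),
      ConcSES ab pb ∧ (∀ g, q (ab g) = a g) ∧
      (∀ z, p (q z) = ρ (pb z)) ∧
      (∀ z z', q z = q z' → pb z = pb z' → z = z') ∧
      (∀ {W : ModuleCat.{0} Λ} (α : W ⟶ E) (β : W ⟶ X'),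
        (∀ w, p (α w) = ρ (β w)) → ∃ φ : W ⟶ Eb, (∀ w, q (φ w) = α w) ∧ (∀ w, pb (φ w) = β w)) := by
  set K : Submodule Λ (E × X') :=
    LinearMap.ker (p.hom.comp (LinearMap.fst Λ E X') -
      ρ.hom.comp (LinearMap.snd Λ E X')) with hK
  have hmem : ∀ z : E × X', z ∈ K ↔ p z.1 = ρ z.2 := by
    intro z
    rw [LinearMap.mem_ker, LinearMap.sub_apply, sub_eq_zero]
    rfl
  let Eb : ModuleCat.{0} Λ := ModuleCat.of Λ K
  let ab : G ⟶ Eb := ModuleCat.ofHom <| LinearMap.codRestrict K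
    (LinearMap.prod a.hom (0 : G →ₗ[Λ] X'))
    (fun g => (hmem _).2 (by show p (a g) = ρ 0; rw [hses.a_p, map_zero]))
  let pb : Eb ⟶ X' := ModuleCat.ofHom <| (LinearMap.snd Λ E X').comp K.subtype
  let q : Eb ⟶ E := ModuleCat.ofHom <| (LinearMap.fst Λ E X').comp K.subtype
  refine ⟨Eb, ab, pb, q, ⟨?_, ?_, ?_⟩, fun g => rfl, ?_, ?_, ?_⟩
  · intro g1 g2 h12
    have : a g1 = a g2 := congrArg (Prod.fst ∘ Subtype.val) h12
    exact hses.1 this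
  · intro x'
    obtain ⟨e, he⟩ := hses.2.1 (ρ x')
    exact ⟨⟨(e, x'), (hmem _).2 he⟩, rfl⟩
  · rintro ⟨⟨e, x'⟩, hz⟩
    constructor
    · intro h0
      have hx' : x' = 0 := h0
      have hpe : p e = 0 := by
        have := (hmem _).1 hz
        rw [this, hx', map_zero]
      obtain ⟨g, hg⟩ := (hses.2.2 e).1 hpe
      refine ⟨g, ?_⟩
      apply Subtype.ext
      show (a g, (0 : X')) = (e, x')
      rw [hg, hx']
    · rintro ⟨g, hg⟩
      have : x' = 0 := by
        have := congrArg (Prod.snd ∘ Subtype.val) hg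
        exact this.symm
      exact this ▸ rfl
  · rintro ⟨⟨e, x'⟩, hz⟩
    exact ((hmem _).1 hz)
  · rintro ⟨⟨e, x'⟩, hz⟩ ⟨⟨e', x''⟩, hz'⟩ h1 h2
    apply Subtype.ext
    show (e, x') = (e', x'')
    have he : e = e' := h1
    have hx : x' = x'' := h2
    rw [he, hx]
  · intro W α β hcomm
    refine ⟨ModuleCat.ofHom <| LinearMap.codRestrict K (LinearMap.prod α.hom β.hom)
      (fun w => (hmem _).2 (hcomm w)), fun w => rfl, fun w => rfl⟩

/-- lifting maps along a surjection with Gorenstein injective kernel, into/from a Good module -/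
lemma lift_along {X' : ModuleCat.{0} Λ} (hX' : Good Λ X') {G : ModuleCat.{0} Λ}
    (hG : IsGorensteinInjective Λ G) {E Y : ModuleCat.{0} Λ} (a : G ⟶ E) (p : E ⟶ Y)
    (hses : ConcSES a p) (ρ : X' ⟶ Y) : ∃ h : X' ⟶ E, ∀ x, p (h x) = ρ x := by
  obtain ⟨Eb, ab, pb, q, conc, hq, hcomm, _, _⟩ := pullbackData a p hses ρ
  obtain ⟨r, hr⟩ := hX' hG ab pb conc
  obtain ⟨s, hs⟩ := sectionOfRetraction conc r hr
  refine ⟨s ≫ q, fun x => ?_⟩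
  show p (q (s x)) = ρ x
  rw [hcomm (s x)]
  congr 1
  exact congrArg (fun φ => φ x) hs

/-- extending a map along an injection with Good cokernel, into a GInj module -/
lemma extend_along {X₁ X₂ X₃ Q : ModuleCat.{0} Λ} (h₃ : Good Λ X₃)
    (hQ : IsGorensteinInjective Λ Q) (ι : X₁ ⟶ X₂) (π : X₂ ⟶ X₃) (hses : ConcSES ι π)
    (ψ : X₁ ⟶ Q) : ∃ ψ' : X₂ ⟶ Q, ∀ x, ψ' (ι x) = ψ x := by
  set W : Submodule Λ (Q × X₂) :=
    LinearMap.range (LinearMap.prod ψ.hom (-ι.hom)) with hW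
  let D : ModuleCat.{0} Λ := ModuleCat.of Λ ((Q × X₂) ⧸ W)
  let b : Q ⟶ D := ModuleCat.ofHom <| W.mkQ.comp (LinearMap.inl Λ Q X₂)
  let j : X₂ ⟶ D := ModuleCat.ofHom <| W.mkQ.comp (LinearMap.inr Λ Q X₂)
  have hπι : ∀ x, π (ι x) = 0 := fun x => hses.a_p x
  have hWle : W ≤ LinearMap.ker (π.hom.comp (LinearMap.snd Λ Q X₂)) := by
    rintro w ⟨x, rfl⟩
    show π (-(ι x)) = 0
    rw [map_neg, hπι, neg_zero]
  let c : D ⟶ X₃ := ModuleCat.ofHom <| W.liftQ (π.hom.comp (LinearMap.snd Λ Q X₂)) hWle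
  have hmk : ∀ (u v : Q × X₂), u - v ∈ W → W.mkQ u = W.mkQ v := by
    intro u v huv
    rw [Submodule.mkQ_apply, Submodule.mkQ_apply]
    exact (Submodule.Quotient.eq W).2 huv
  have hconc : ConcSES b c := by
    refine ⟨?_, ?_, ?_⟩
    · intro q1 q2 h12
      have h0 : ((q1, 0) : Q × X₂) - (q2, 0) ∈ W := (Submodule.Quotient.eq W).1 h12
      obtain ⟨x, hx⟩ := h0
      have hx' : (ψ x, -(ι x)) = ((q1, 0) : Q × X₂) - (q2, 0) := hx
      rw [Prod.mk_sub_mk, sub_zero] at hx'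
      have h2 : -(ι x) = (0 : X₂) := congrArg Prod.snd hx'
      have h2' : ι x = 0 := by rwa [neg_eq_zero] at h2
      have h3 : x = 0 := hses.1 (by rw [h2', map_zero])
      have h1 : ψ x = q1 - q2 := congrArg Prod.fst hx'
      rw [h3, map_zero] at h1
      exact sub_eq_zero.mp h1.symm
    · intro x₃
      obtain ⟨x₂, rfl⟩ := hses.2.1 x₃
      exact ⟨j x₂, rfl⟩
    · intro e
      constructor
      · intro he
        obtain ⟨⟨q0, x₂⟩, rfl⟩ := W.mkQ_surjective e
        have hx₂ : π x₂ = 0 := he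
        obtain ⟨x₁, hx₁⟩ := (hses.2.2 x₂).1 hx₂
        refine ⟨q0 + ψ x₁, hmk _ _ ?_⟩
        refine ⟨x₁, ?_⟩
        show (ψ x₁, -(ι x₁)) = ((q0 + ψ x₁, 0) : Q × X₂) - (q0, x₂)
        rw [Prod.mk_sub_mk, ← hx₁]
        refine congrArg₂ Prod.mk ?_ ?_
        · rw [add_sub_cancel_left]
        · rw [zero_sub]
      · rintro ⟨g, rfl⟩
        show π 0 = 0
        rw [map_zero]
  obtain ⟨ρ, hρ⟩ := h₃ hQ b c hconc
  refine ⟨j ≫ ρ, fun x => ?_⟩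
  show ρ (j (ι x)) = ψ x
  have hjb : j (ι x) = b (ψ x) := by
    apply hmk
    refine ⟨-x, ?_⟩
    show (ψ (-x), -(ι (-x))) = ((0, ι x) : Q × X₂) - (ψ x, 0)
    rw [map_neg, map_neg, neg_neg, Prod.mk_sub_mk]
    refine congrArg₂ Prod.mk ?_ ?_
    · rw [zero_sub]
    · rw [sub_zero]
  rw [hjb]
  exact congrArg (fun φ => φ (ψ x)) hρ


lemma good_retract {X Y : ModuleCat.{0} Λ} (i : X ⟶ Y) (r : Y ⟶ X) (hir : i ≫ r = 𝟙 X)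
    (hY : Good Λ Y) : Good Λ X := by
  intro G hG E a p hses
  obtain ⟨Eb, ab, pb, q, conc, hq, hcomm, hjoint, huniv⟩ := pullbackData a p hses r
  obtain ⟨rb, hrb⟩ := hY hG ab pb conc
  obtain ⟨φ, hφ1, hφ2⟩ := huniv (𝟙 E) (p ≫ i) (fun e => by
    show p e = r (i (p e))
    have : r (i (p e)) = p e := congrArg (fun ψ => ψ (p e)) hir
    rw [this])
  refine ⟨φ ≫ rb, ?_⟩
  ext g
  show rb (φ (a g)) = g
  have hφa : φ (a g) = ab g := by
    apply hjoint
    · rw [hφ1, hq]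
      rfl
    · rw [hφ2]
      show i (p (a g)) = pb (ab g)
      have h1 : pb (ab g) = 0 := by
        have := conc.a_p g
        exact this
      rw [h1, hses.a_p, map_zero]
  rw [hφa]
  exact congrArg (fun ψ => ψ g) hrb

lemma good_ext {X₁ X₂ X₃ : ModuleCat.{0} Λ} (ι : X₁ ⟶ X₂) (π : X₂ ⟶ X₃)
    (hcs : ConcSES ι π) (h₁ : Good Λ X₁) (h₃ : Good Λ X₃) : Good Λ X₂ := by
  intro G hG E a p hses
  obtain ⟨s₁, hs₁⟩ := lift_along h₁ hG a p hses ι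
  set Ws : Submodule Λ E := LinearMap.range s₁.hom with hWs
  let Eq : ModuleCat.{0} Λ := ModuleCat.of Λ (E ⧸ Ws)
  let qE : E ⟶ Eq := ModuleCat.ofHom <| Ws.mkQ
  let ab : G ⟶ Eq := a ≫ qE
  have hWsle : Ws ≤ LinearMap.ker (π.hom.comp p.hom) := by
    rintro w ⟨x, rfl⟩
    show π (p (s₁ x)) = 0
    rw [hs₁, hcs.a_p]
  let pq : Eq ⟶ X₃ := ModuleCat.ofHom <| Ws.liftQ (π.hom.comp p.hom) hWsle
  have hconc : ConcSES ab pq := by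
    refine ⟨?_, ?_, ?_⟩
    · intro g1 g2 h12
      have h0 : a g1 - a g2 ∈ Ws := (Submodule.Quotient.eq Ws).1 h12
      obtain ⟨x, hx⟩ := h0
      have hpx : ι x = 0 := by
        have h1 : p (s₁ x) = p (a g1 - a g2) := congrArg p hx
        rw [hs₁, map_sub, hses.a_p, hses.a_p, sub_zero] at h1
        exact h1
      have hx0 : x = 0 := hcs.1 (by rw [hpx, map_zero])
      rw [hx0, map_zero] at hx
      apply hses.1
      exact (sub_eq_zero.mp hx.symm)
    · intro x₃
      obtain ⟨x₂, rfl⟩ := hcs.2.1 x₃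
      obtain ⟨e, rfl⟩ := hses.2.1 x₂
      exact ⟨qE e, rfl⟩
    · intro z
      constructor
      · intro hz
        obtain ⟨e, rfl⟩ := Ws.mkQ_surjective z
        have hpe : π (p e) = 0 := hz
        obtain ⟨x₁, hx₁⟩ := (hcs.2.2 (p e)).1 hpe
        have h1 : p (e - s₁ x₁) = 0 := by rw [map_sub, hs₁, hx₁, sub_self]
        obtain ⟨g, hg⟩ := (hses.2.2 _).1 h1
        refine ⟨g, ?_⟩
        show Ws.mkQ (a g) = Ws.mkQ e
        rw [Submodule.mkQ_apply, Submodule.mkQ_apply]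
        apply (Submodule.Quotient.eq Ws).2
        refine ⟨-x₁, ?_⟩
        show s₁ (-x₁) = a g - e
        rw [map_neg, hg]
        abel
      · rintro ⟨g, rfl⟩
        show π (p (a g)) = 0
        rw [hses.a_p, map_zero]
  obtain ⟨rq, hrq⟩ := h₃ hG ab pq hconc
  exact ⟨qE ≫ rq, by rw [← Category.assoc]; exact hrq⟩

lemma good_ker {X₁ X₂ X₃ : ModuleCat.{0} Λ} (ι : X₁ ⟶ X₂) (π : X₂ ⟶ X₃)
    (hcs : ConcSES ι π) (h₂ : Good Λ X₂) (h₃ : Good Λ X₃) : Good Λ X₁ := by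
  intro G hG E a p hses
  obtain ⟨I, Gp, hI, hGp, at', pt, conc2⟩ := GIses hG
  have hamono : Mono a := (ModuleCat.mono_iff_injective a).2 hses.1
  let φ : E ⟶ I := Injective.factorThru at' a
  have hφ : a ≫ φ = at' := Injective.comp_factorThru at' a
  obtain ⟨ψ, hψ⟩ := descend p hses.2.1 (φ ≫ pt) (by
    intro e he
    obtain ⟨g, rfl⟩ := (hses.2.2 e).1 he
    show pt (φ (a g)) = 0
    have h1 : φ (a g) = at' g := congrArg (fun θ => θ g) hφ
    rw [h1, conc2.a_p])
  obtain ⟨ψ', hψ'⟩ := extend_along h₃ hGp ι π hcs ψ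
  obtain ⟨h', hh'⟩ := lift_along h₂ hG at' pt conc2 ψ'
  obtain ⟨v, hv⟩ := invComp at' conc2.1 (φ - p ≫ (ι ≫ h')) (by
    intro e
    apply (conc2.2.2 _).1
    show pt ((φ - p ≫ (ι ≫ h')) e) = 0
    have h1 : (φ - p ≫ (ι ≫ h')) e = φ e - h' (ι (p e)) := rfl
    rw [h1, map_sub, hh', hψ']
    have h2 : pt (φ e) = ψ (p e) := (congrArg (fun θ => θ e) hψ).symm
    rw [h2, sub_self])
  refine ⟨v, ?_⟩
  ext g
  apply conc2.1
  show at' (v (a g)) = at' g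
  have h1 : at' (v (a g)) = (φ - p ≫ (ι ≫ h')) (a g) := congrArg (fun θ => θ (a g)) hv
  rw [h1]
  show φ (a g) - h' (ι (p (a g))) = at' g
  rw [hses.a_p, map_zero, map_zero, sub_zero]
  exact congrArg (fun θ => θ g) hφ

lemma good_coker {X₁ X₂ X₃ : ModuleCat.{0} Λ} (ι : X₁ ⟶ X₂) (π : X₂ ⟶ X₃)
    (hcs : ConcSES ι π) (h₁ : Good Λ X₁) (h₂ : Good Λ X₂) : Good Λ X₃ := by
  intro G hG E a p hses
  obtain ⟨u, hu⟩ := lift_along h₂ hG a p hses π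
  obtain ⟨v, hv⟩ := invComp a hses.1 (ι ≫ u) (by
    intro x₁
    apply (hses.2.2 _).1
    show p (u (ι x₁)) = 0
    rw [hu, hcs.a_p])
  obtain ⟨J, G', hJ, hG', a', p', conc'⟩ := GIses' hG
  obtain ⟨v', hv'⟩ := lift_along h₁ hG' a' p' conc' v
  have hιmono : Mono ι := (ModuleCat.mono_iff_injective ι).2 hcs.1
  let w : X₂ ⟶ J := Injective.factorThru v' ι
  have hw : ι ≫ w = v' := Injective.comp_factorThru v' ι
  let vt : X₂ ⟶ G := w ≫ p'
  have hvt : ∀ x₁, vt (ι x₁) = v x₁ := by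
    intro x₁
    show p' (w (ι x₁)) = v x₁
    have h1 : w (ι x₁) = v' x₁ := congrArg (fun θ => θ x₁) hw
    rw [h1, hv']
  obtain ⟨s, hs⟩ := descend π hcs.2.1 (u - vt ≫ a) (by
    intro x₂ hx₂
    obtain ⟨x₁, rfl⟩ := (hcs.2.2 x₂).1 hx₂
    show u (ι x₁) - a (vt (ι x₁)) = 0
    rw [hvt]
    have h1 : a (v x₁) = u (ι x₁) := congrArg (fun θ => θ x₁) hv
    rw [h1, sub_self])
  have hsp : s ≫ p = 𝟙 X₃ := by
    ext x₃
    obtain ⟨x₂, rfl⟩ := hcs.2.1 x₃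
    show p (s (π x₂)) = π x₂
    have h1 : s (π x₂) = u x₂ - a (vt x₂) := congrArg (fun θ => θ x₂) hs
    rw [h1, map_sub, hu, hses.a_p, sub_zero]
  exact retractionOfSection hses s hsp



lemma concOfShortExact {S : ShortComplex (ModuleCat.{0} Λ)} (hS : S.ShortExact) :
    ConcSES S.f S.g := by
  have hm : Mono S.f := hS.mono_f
  have he : Epi S.g := hS.epi_g
  have hex := hS.exact
  rw [ShortComplex.moduleCat_exact_iff] at hex
  refine ⟨(ModuleCat.mono_iff_injective S.f).1 hm, (ModuleCat.epi_iff_surjective S.g).1 he, ?_⟩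
  intro e
  constructor
  · intro h0; exact hex e h0
  · rintro ⟨g, rfl⟩; exact S.moduleCat_zero_apply g

lemma liftAt_all {X : ModuleCat.{0} Λ} (P : ProjectiveResolution X) (hGood : Good Λ X) :
    ∀ (n : ℕ) (G : ModuleCat.{0} Λ), IsGorensteinInjective Λ G → LiftAt P G n := by
  intro n
  induction n with
  | zero =>
    intro G hG
    exact liftAt_zero_of_split P (fun E a p conc => hGood hG a p conc)
  | succ n ih =>
    intro G hG
    obtain ⟨I, Gp, hI, hGp, at', pt, conc⟩ := GIses hG
    exact liftAt_step P hI at' pt conc n (ih Gp hGp)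

lemma mem_leftPerp_iff_good (X : ModuleCat.{0} Λ) :
    X ∈ leftPerp Λ {G | IsGorensteinInjective Λ G} ↔ Good Λ X := by
  let P : ProjectiveResolution X := ProjectiveResolution.of X
  constructor
  · intro h G hG E a p conc
    exact split_of_liftAt P ((extVanish_iff_liftAt P G).1 (h G hG) 0) a p conc
  · intro h G hG
    exact (extVanish_iff_liftAt P G).2 (fun n => liftAt_all P h n G hG)

end Stmt12Aux

open Stmt12Aux

/-- The class `^⊥(GInj Λ)` is a thick subcategory of `Mod Λ`: closed under
direct summands, extensions, kernels of epimorphisms, and cokernels of monomorphisms. -/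

theorem stmt12 (Λ : Type) [Ring Λ] :
    (∀ X Y : ModuleCat.{0} Λ, (∃ (i : X ⟶ Y) (r : Y ⟶ X), i ≫ r = 𝟙 X) →
      Y ∈ leftPerp Λ {G | IsGorensteinInjective Λ G} →
      X ∈ leftPerp Λ {G | IsGorensteinInjective Λ G}) ∧
    (∀ S : ShortComplex (ModuleCat.{0} Λ), S.ShortExact →
      ((S.X₁ ∈ leftPerp Λ {G | IsGorensteinInjective Λ G} →
        S.X₃ ∈ leftPerp Λ {G | IsGorensteinInjective Λ G} →
        S.X₂ ∈ leftPerp Λ {G | IsGorensteinInjective Λ G}) ∧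
       (S.X₂ ∈ leftPerp Λ {G | IsGorensteinInjective Λ G} →
        S.X₃ ∈ leftPerp Λ {G | IsGorensteinInjective Λ G} →
        S.X₁ ∈ leftPerp Λ {G | IsGorensteinInjective Λ G}) ∧
       (S.X₁ ∈ leftPerp Λ {G | IsGorensteinInjective Λ G} →
        S.X₂ ∈ leftPerp Λ {G | IsGorensteinInjective Λ G} →
        S.X₃ ∈ leftPerp Λ {G | IsGorensteinInjective Λ G}))) := by
  constructor
  · rintro X Y ⟨i, r, hir⟩ hY
    exact (mem_leftPerp_iff_good X).2
      (good_retract i r hir ((mem_leftPerp_iff_good Y).1 hY))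
  · intro S hS
    have conc : ConcSES S.f S.g := concOfShortExact hS
    refine ⟨?_, ?_, ?_⟩
    · intro h1 h3
      exact (mem_leftPerp_iff_good S.X₂).2 (good_ext S.f S.g conc
        ((mem_leftPerp_iff_good S.X₁).1 h1) ((mem_leftPerp_iff_good S.X₃).1 h3))
    · intro h2 h3
      exact (mem_leftPerp_iff_good S.X₁).2 (good_ker S.f S.g conc
        ((mem_leftPerp_iff_good S.X₂).1 h2) ((mem_leftPerp_iff_good S.X₃).1 h3))
    · intro h1 h2
      exact (mem_leftPerp_iff_good S.X₃).2 (good_coker S.f S.g conc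
        ((mem_leftPerp_iff_good S.X₁).1 h1) ((mem_leftPerp_iff_good S.X₂).1 h2))
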